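/- Fix M ≥ 1 and v ∈ ℝ^M. Let ε₁, …, ε_M be independent real random variables, each with the standard Gumbel distribution, i.e., with probability density f(x) = e^{−x} e^{−e^{−x}} on ℝ. Then E[max_{1 ≤ m ≤ M} (v_m + ε_m)] = log(Σ_{m=1}^M e^{v_m}) + γ, where γ is the Euler–Mascheroni constant. -/

import Mathlib

open MeasureTheory ProbabilityTheory


open MeasureTheory Real Set Filter
open scoped NNReal ENNReal

namespace GumbelAux

/-- Gumbel density -/
noncomputable def gd (x : ℝ) : ℝ := Real.exp (-x) * Real.exp (-Real.exp (-x))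

/-- Gumbel CDF -/
noncomputable def G (x : ℝ) : ℝ := Real.exp (-Real.exp (-x))

lemma gd_nonneg (x : ℝ) : 0 ≤ gd x :=
  mul_nonneg (Real.exp_nonneg _) (Real.exp_nonneg _)

lemma hasDerivAt_G (x : ℝ) : HasDerivAt G (gd x) x := by
  have h1 : HasDerivAt (fun x : ℝ => -Real.exp (-x)) (Real.exp (-x)) x := by
    simpa [Function.comp_def, Pi.neg_def] using ((Real.hasDerivAt_exp (-x)).comp x (hasDerivAt_neg x)).neg
  exact (by simpa [gd, mul_comm, Function.comp_def] using (Real.hasDerivAt_exp _).comp x h1 :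
    HasDerivAt (fun x => Real.exp (-Real.exp (-x))) (gd x) x)

lemma tendsto_G_atBot : Tendsto G atBot (nhds 0) := by
  have h1 : Tendsto (fun x : ℝ => -Real.exp (-x)) atBot atBot :=
    tendsto_neg_atTop_atBot.comp (Real.tendsto_exp_atTop.comp tendsto_neg_atBot_atTop)
  exact Real.tendsto_exp_atBot.comp h1

lemma tendsto_G_atTop : Tendsto G atTop (nhds 1) := by
  have h1 : Tendsto (fun x : ℝ => -Real.exp (-x)) atTop (nhds 0) := by
    simpa using (Real.tendsto_exp_atBot.comp tendsto_neg_atTop_atBot).neg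
  simpa using (Real.continuous_exp.tendsto 0).comp h1 |>.congr (fun _ => rfl) |> fun h => (by exact h : Tendsto G atTop (nhds (Real.exp 0)))

end GumbelAux

namespace GumbelAux

lemma integrableOn_log_mul_exp : IntegrableOn (fun t : ℝ => Real.log t * Real.exp (-t)) (Ioi 0) := by
  have h1 : IntegrableOn (fun t : ℝ => Real.exp (-t) * t ^ ((2:ℝ)⁻¹ - 1)) (Ioi 0) :=
    Real.GammaIntegral_convergent (by norm_num)
  have h2 : IntegrableOn (fun t : ℝ => Real.exp (-t) * t ^ ((2:ℝ) - 1)) (Ioi 0) :=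
    Real.GammaIntegral_convergent (by norm_num)
  refine Integrable.mono ((h1.const_mul 2).add h2) ?_ ?_
  · exact ((Real.measurable_log.mul
      (Real.measurable_exp.comp measurable_neg)).aestronglyMeasurable)
  · filter_upwards [ae_restrict_mem measurableSet_Ioi] with t ht
    have ht : (0:ℝ) < t := ht
    have hlog : |Real.log t| ≤ 2 * t ^ (-(2:ℝ)⁻¹) + t := by
      rw [abs_le]
      constructor
      · have h3 : Real.log (t ^ (-(2:ℝ)⁻¹)) ≤ t ^ (-(2:ℝ)⁻¹) - 1 :=
          Real.log_le_sub_one_of_pos (Real.rpow_pos_of_pos ht _)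
      

        rw [Real.log_rpow ht] at h3
        nlinarith [Real.rpow_nonneg ht.le (-(2:ℝ)⁻¹), ht.le]
      · have h4 : Real.log t ≤ t - 1 := Real.log_le_sub_one_of_pos ht
        nlinarith [Real.rpow_nonneg ht.le (-(2:ℝ)⁻¹)]
    have hnorm : ‖Real.log t * Real.exp (-t)‖ = |Real.log t| * Real.exp (-t) := by
      rw [norm_mul, Real.norm_eq_abs, Real.norm_eq_abs, abs_of_pos (Real.exp_pos _)]
    rw [hnorm]
    have hhb : |Real.log t| * Real.exp (-t) ≤ (2 * t ^ (-(2:ℝ)⁻¹) + t) * Real.exp (-t) :=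
      mul_le_mul_of_nonneg_right hlog (Real.exp_nonneg _)
    refine hhb.trans (le_of_eq ?_)
    have hval : ((fun x : ℝ => 2 * (Real.exp (-x) * x ^ ((2:ℝ)⁻¹ - 1)))
        + fun t : ℝ => Real.exp (-t) * t ^ ((2:ℝ) - 1)) t
        = (2 * t ^ (-(2:ℝ)⁻¹) + t) * Real.exp (-t) := by
      simp only [Pi.add_apply]
      rw [show (2:ℝ)⁻¹ - 1 = -(2:ℝ)⁻¹ by norm_num, show (2:ℝ) - 1 = 1 by norm_num, Real.rpow_one]
      ring
    rw [hval, Real.norm_eq_abs, abs_of_nonneg (by positivity)]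

lemma integral_log_mul_exp : ∫ t in Ioi 0, Real.log t * Real.exp (-t)
    = -Real.eulerMascheroniConstant := by
  set I : ℝ := ∫ t in Ioi 0, Real.log t * Real.exp (-t) with hI
  have h0 : (0:ℝ) < (1:ℂ).re := by norm_num
  have hD := Complex.hasDerivAt_GammaIntegral h0
  have hval : (∫ t : ℝ in Ioi 0, (t:ℂ) ^ ((1:ℂ) - 1) * (Real.log t * Real.exp (-t))) = (I : ℂ) := by
    rw [hI]
    have : (∫ t : ℝ in Ioi 0, (t:ℂ) ^ ((1:ℂ) - 1) * (Real.log t * Real.exp (-t)))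
        = ∫ t : ℝ in Ioi 0, ((Real.log t * Real.exp (-t) : ℝ) : ℂ) := by
      refine setIntegral_congr_fun measurableSet_Ioi fun t _ => ?_
      push_cast
      simp
    rw [this]
    exact integral_ofReal
  rw [hval] at hD
  have hev : Complex.Gamma =ᶠ[nhds (1:ℂ)] Complex.GammaIntegral := by
    filter_upwards [(isOpen_lt continuous_const Complex.continuous_re).mem_nhds h0] with s hs
    exact Complex.Gamma_eq_integral hs
  have hG : HasDerivAt Complex.Gamma (I : ℂ) 1 := hD.congr_of_eventuallyEq hev
  have hG' : HasDerivAt Complex.Gamma ((I : ℝ) : ℂ) (((1:ℝ) : ℂ)) := by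
    simpa using hG
  have hR := hG'.real_of_complex
  have hfun : (fun x : ℝ => (Complex.Gamma x).re) = Real.Gamma := by
    funext x; rw [Complex.Gamma_ofReal, Complex.ofReal_re]
  rw [hfun, Complex.ofReal_re] at hR
  have := hR.unique Real.hasDerivAt_Gamma_one
  linarith [this]

end GumbelAux

namespace GumbelAux

lemma cov_aux (g : ℝ → ℝ) :
    ((∫ x, g x) = ∫ t in Ioi 0, |(-t⁻¹)| • g (-Real.log t))
    ∧ (Integrable g ↔ IntegrableOn (fun t => |(-t⁻¹)| • g (-Real.log t)) (Ioi 0)) := by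
  have hderiv : ∀ t ∈ Ioi (0:ℝ), HasDerivWithinAt (fun t : ℝ => -Real.log t) (-t⁻¹) (Ioi 0) t :=
    fun t ht => ((Real.hasDerivAt_log (ne_of_gt ht)).neg).hasDerivWithinAt
  have hinj : InjOn (fun t : ℝ => -Real.log t) (Ioi 0) := by
    intro a ha b hb h
    have : Real.log a = Real.log b := by simpa using neg_injective h
    rw [← Real.exp_log ha, ← Real.exp_log hb, this]
  have himg : (fun t : ℝ => -Real.log t) '' Ioi 0 = univ := by
    refine eq_univ_of_forall fun x => ⟨Real.exp (-x), Real.exp_pos _, by simp⟩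
  constructor
  · rw [← setIntegral_univ, ← himg]
    exact integral_image_eq_integral_abs_deriv_smul measurableSet_Ioi hderiv hinj g
  · rw [← integrableOn_univ, ← himg]
    exact integrableOn_image_iff_integrableOn_abs_deriv_smul measurableSet_Ioi hderiv hinj g

lemma gd_neg_log {t : ℝ} (ht : 0 < t) : gd (-Real.log t) = t * Real.exp (-t) := by
  simp [gd, Real.exp_log ht]

lemma integrable_gd : Integrable gd := by
  rw [(cov_aux gd).2]
  refine IntegrableOn.congr_fun (exp_neg_integrableOn_Ioi 0 one_pos) (fun t ht => ?_)
    measurableSet_Ioi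
  have ht' : t ≠ 0 := ne_of_gt ht
  rw [gd_neg_log ht, abs_neg, abs_inv, abs_of_pos ht, smul_eq_mul]
  field_simp

lemma integral_gd : (∫ x, gd x) = 1 := by
  have := integral_of_hasDerivAt_of_tendsto (fun x => hasDerivAt_G x) integrable_gd
    tendsto_G_atBot tendsto_G_atTop
  simpa using this

lemma integrable_mul_gd : Integrable (fun x => x * gd x) := by
  rw [(cov_aux _).2]
  refine IntegrableOn.congr_fun integrableOn_log_mul_exp.neg (fun t ht => ?_) measurableSet_Ioi
  have ht' : t ≠ 0 := ne_of_gt ht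
  rw [Pi.neg_apply, gd_neg_log ht, abs_neg, abs_inv, abs_of_pos ht, smul_eq_mul]
  field_simp

lemma integral_mul_gd : (∫ x, x * gd x) = Real.eulerMascheroniConstant := by
  rw [(cov_aux _).1]
  have : ∀ t ∈ Ioi (0:ℝ), |(-t⁻¹)| • ((-Real.log t) * gd (-Real.log t))
      = -(Real.log t * Real.exp (-t)) := by
    intro t ht
    have ht' : t ≠ 0 := ne_of_gt ht
    rw [gd_neg_log ht, abs_neg, abs_inv, abs_of_pos ht, smul_eq_mul]
    field_simp
  rw [setIntegral_congr_fun measurableSet_Ioi this, integral_neg, integral_log_mul_exp, neg_neg]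

end GumbelAux

namespace GumbelAux

lemma continuous_gd : Continuous gd := by unfold gd; fun_prop

noncomputable def nu (c : ℝ) : Measure ℝ :=
  volume.withDensity fun x => ENNReal.ofReal (gd (x - c))

lemma hasDerivAt_G_shift (c x : ℝ) : HasDerivAt (fun x => G (x - c)) (gd (x - c)) x := by
  simpa [Function.comp_def] using (hasDerivAt_G (x - c)).comp x ((hasDerivAt_id x).sub_const c)

lemma integrable_gd_shift (c : ℝ) : Integrable (fun x => gd (x - c)) :=
  integrable_gd.comp_sub_right c

lemma tendsto_sub_atBot (c : ℝ) : Tendsto (fun x : ℝ => x - c) atBot atBot := by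
  simpa [sub_eq_add_neg] using tendsto_atBot_add_const_right atBot (-c) (tendsto_id (α := ℝ))

lemma integral_Iic_gd_shift (c a : ℝ) : ∫ x in Iic a, gd (x - c) = G (a - c) := by
  have h := integral_Iic_of_hasDerivAt_of_tendsto' (f := fun x => G (x - c)) (a := a)
    (fun x _ => hasDerivAt_G_shift c x) (integrable_gd_shift c).integrableOn
    (tendsto_G_atBot.comp (tendsto_sub_atBot c))
  simpa using h

lemma nu_Iic (c a : ℝ) : nu c (Iic a) = ENNReal.ofReal (G (a - c)) := by
  rw [nu, withDensity_apply _ measurableSet_Iic,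
    ← ofReal_integral_eq_lintegral_ofReal (integrable_gd_shift c).integrableOn
      (ae_of_all _ fun x => gd_nonneg _), integral_Iic_gd_shift]

lemma nu_univ (c : ℝ) : nu c univ = 1 := by
  rw [nu, withDensity_apply _ MeasurableSet.univ, Measure.restrict_univ,
    ← ofReal_integral_eq_lintegral_ofReal (integrable_gd_shift c)
      (ae_of_all _ fun x => gd_nonneg _),
    integral_sub_right_eq_self gd c, integral_gd, ENNReal.ofReal_one]

instance (c : ℝ) : IsProbabilityMeasure (nu c) := ⟨nu_univ c⟩

lemma nu_integral_id (c : ℝ) : ∫ x, x ∂(nu c) = c + Real.eulerMascheroniConstant := by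
  have hm : Measurable fun x : ℝ => Real.toNNReal (gd (x - c)) :=
    (continuous_gd.measurable.comp (measurable_id.sub_const c)).real_toNNReal
  have hd : (fun x : ℝ => ENNReal.ofReal (gd (x - c)))
      = fun x => ((Real.toNNReal (gd (x - c)) : ℝ≥0) : ℝ≥0∞) := rfl
  rw [nu, hd, integral_withDensity_eq_integral_smul hm (fun x => x)]
  have h1 : (fun x : ℝ => (Real.toNNReal (gd (x - c))) • x)
      = fun x => (fun y => gd y * (y + c)) (x - c) := by
    funext x
    rw [NNReal.smul_def, smul_eq_mul, Real.coe_toNNReal _ (gd_nonneg _)]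
    ring_nf
  rw [h1, integral_sub_right_eq_self (fun y => gd y * (y + c)) c]
  have h2 : (fun y : ℝ => gd y * (y + c)) = fun y => y * gd y + c * gd y := by
    funext y; ring
  rw [h2, integral_add integrable_mul_gd (integrable_gd.const_mul c),
    integral_mul_gd, MeasureTheory.integral_const_mul c, integral_gd]
  ring

end GumbelAux

/-- The expected maximum perceived utility under i.i.d. standard Gumbel
noise is the log-sum-exp of the observed utilities plus the Euler–Mascheroni constant. -/
theorem gumbel_expected_max {M : ℕ} (hM : 1 ≤ M) (v : Fin M → ℝ)
    {Ω : Type*} [MeasurableSpace Ω] (μ : Measure Ω) [IsProbabilityMeasure μ]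
    (ε : Fin M → Ω → ℝ) (hmeas : ∀ i, Measurable (ε i))
    (hindep : iIndepFun ε μ)
    (hgumbel : ∀ i, Measure.map (ε i) μ =
      volume.withDensity fun x => ENNReal.ofReal (Real.exp (-x) * Real.exp (-Real.exp (-x)))) :
    ∫ ω, (⨆ m : Fin M, (v m + ε m ω)) ∂μ =
      Real.log (∑ m, Real.exp (v m)) + Real.eulerMascheroniConstant := by
  classical
  have hne : Nonempty (Fin M) := ⟨⟨0, hM⟩⟩
  set S : ℝ := ∑ m, Real.exp (v m) with hS
  have hSpos : 0 < S := Finset.sum_pos (fun m _ => Real.exp_pos _) ⟨⟨0, hM⟩, Finset.mem_univ _⟩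
  set c : ℝ := Real.log S with hc
  set X : Ω → ℝ := fun ω => ⨆ m, (v m + ε m ω) with hX
  have hXmeas : Measurable X := by
    have hXeq : X = fun ω => Finset.univ.sup' Finset.univ_nonempty (fun m => v m + ε m ω) := by
      funext ω; rw [Finset.sup'_univ_eq_ciSup]
    rw [hXeq]
    have hms := Finset.measurable_sup' (f := fun (m : Fin M) (ω : Ω) => v m + ε m ω)
      Finset.univ_nonempty (fun m _ => measurable_const.add (hmeas m))
    have heq : (Finset.univ.sup' Finset.univ_nonempty fun (m : Fin M) (ω : Ω) => v m + ε m ω)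
        = fun ω => Finset.univ.sup' Finset.univ_nonempty fun m => v m + ε m ω := by
      funext ω
      exact Finset.sup'_apply Finset.univ_nonempty _ ω
    rwa [heq] at hms
  have hgd : ∀ i, Measure.map (ε i) μ = GumbelAux.nu 0 := by
    intro i
    rw [hgumbel i, GumbelAux.nu]
    congr 1
    funext x
    rw [sub_zero]
    rfl
  have hcdf : ∀ (i : Fin M) (t : ℝ), μ (ε i ⁻¹' Iic t) = ENNReal.ofReal (GumbelAux.G t) := by
    intro i t
    rw [← Measure.map_apply (hmeas i) measurableSet_Iic, hgd i, GumbelAux.nu_Iic, sub_zero]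
  have hmap : Measure.map X μ = GumbelAux.nu c := by
    have hprob : IsProbabilityMeasure (Measure.map X μ) :=
      Measure.isProbabilityMeasure_map hXmeas.aemeasurable
    refine MeasureTheory.Measure.ext_of_Iic _ _ (fun a => ?_)
    rw [Measure.map_apply hXmeas measurableSet_Iic, GumbelAux.nu_Iic]
    have hpre : X ⁻¹' Iic a = ⋂ m, ε m ⁻¹' Iic (a - v m) := by
      ext ω
      simp only [mem_preimage, mem_Iic, mem_iInter, hX]
      rw [ciSup_le_iff (Set.Finite.bddAbove (Set.finite_range _))]
      exact forall_congr' fun m => by constructor <;> intro h <;> linarith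
    rw [hpre, hindep.meas_iInter (fun m => ⟨Iic (a - v m), measurableSet_Iic, rfl⟩)]
    simp_rw [hcdf]
    have hGnn : ∀ i ∈ Finset.univ, (0:ℝ) ≤ GumbelAux.G (a - v i) :=
      fun i _ => (Real.exp_pos _).le
    rw [← ENNReal.ofReal_prod_of_nonneg hGnn]
    congr 1
    unfold GumbelAux.G
    rw [← Real.exp_sum]
    congr 1
    have hterm : ∀ m : Fin M, -Real.exp (-(a - v m)) = -(Real.exp (-a) * Real.exp (v m)) := by
      intro m
      rw [← Real.exp_add]
      ring_nf
    rw [Finset.sum_congr rfl (fun m _ => hterm m), Finset.sum_neg_distrib, ← Finset.mul_sum,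
      ← hS, show -(a - c) = -a + c by ring, Real.exp_add, hc, Real.exp_log hSpos]
  have hfinal : ∫ ω, X ω ∂μ = c + Real.eulerMascheroniConstant := by
    have hmi : ∫ x, x ∂(Measure.map X μ) = ∫ ω, X ω ∂μ :=
      integral_map hXmeas.aemeasurable aestronglyMeasurable_id
    rw [← hmi, hmap]
    exact GumbelAux.nu_integral_id c
  simpa [hX, hc, hS] using hfinal
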